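/- Every guarded Conway category (C, ◇, †) satisfies the Bekič identity: for all f : ◇X × ◇Y × A → X and g : ◇X × ◇Y × A → Y, (⟨f, g⟩ ∘ (can × id_A))† = ⟨e_L†, e_R†⟩, where can = ⟨◇π_ℓ, ◇π_r⟩ : ◇(X × Y) → ◇X × ◇Y, e_R = g ∘ ⟨p_X ∘ f†, id_{◇Y × A}⟩ : ◇Y × A → Y and e_L = f ∘ (id_{◇X} × ⟨p_Y ∘ e_R†, id_A⟩) : ◇X × A → X. -/

import Mathlib

open CategoryTheory CategoryTheory.Limits

universe v u

/-- A guarded Conway category structure: a pointed endofunctor `D` (with point `p`) on a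
cartesian category together with a guarded fixpoint operator `dag` satisfying the
fixpoint, parameter, (simplified) composition and double dagger identities. -/
structure IsGuardedConway {C : Type u} [Category.{v} C] [HasFiniteProducts C]
    (D : C ⥤ C) (p : 𝟭 C ⟶ D)
    (dag : ∀ {X Y : C}, (D.obj X ⨯ Y ⟶ X) → (Y ⟶ X)) : Prop where
  fix : ∀ {X Y : C} (f : D.obj X ⨯ Y ⟶ X),
      dag f = prod.lift (dag f) (𝟙 Y) ≫ prod.map (p.app X) (𝟙 Y) ≫ f
  param : ∀ {X Y Z : C} (f : D.obj X ⨯ Y ⟶ X) (h : Z ⟶ Y),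
      dag (prod.map (𝟙 (D.obj X)) h ≫ f) = h ≫ dag f
  comp : ∀ {X Y Z : C} (f : D.obj X ⨯ Y ⟶ Z) (g : Z ⟶ X),
      dag (f ≫ g) = dag (prod.map (D.map g) (𝟙 Y) ≫ f) ≫ g
  ddag : ∀ {X Y : C} (f : D.obj X ⨯ (D.obj X ⨯ Y) ⟶ X),
      dag (dag f) = dag (prod.lift prod.fst (𝟙 (D.obj X ⨯ Y)) ≫ f)

attribute [local simp] prod.lift_fst prod.lift_snd prod.lift_fst_assoc prod.lift_snd_assoc

section Aux

variable {C : Type u} [Category.{v} C] [HasFiniteProducts C]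
    {D : C ⥤ C} {p : 𝟭 C ⟶ D}
    {dag : ∀ {X Y : C}, (D.obj X ⨯ Y ⟶ X) → (Y ⟶ X)}
    (hC : IsGuardedConway D p @dag)

include hC

/-- dagger of a map not using its guard is trivial -/
lemma dag_snd_comp {X B : C} (c : B ⟶ X) : dag (prod.snd ≫ c) = c := by
  conv_lhs => rw [hC.fix]
  simp

/-- Triangular lemma: first component guarded only through `Dπ₁`, second component
constant in the guard. -/
lemma tri {X Y B : C} (f₁ : D.obj X ⨯ B ⟶ X) (c : B ⟶ Y) :
    dag (prod.lift (prod.map (D.map (prod.fst : X ⨯ Y ⟶ X)) (𝟙 B) ≫ f₁) (prod.snd ≫ c)) =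
      prod.lift (dag f₁) c := by
  set t : D.obj (X ⨯ B) ⨯ B ⟶ X ⨯ B :=
    prod.lift (prod.map (D.map (prod.fst : X ⨯ B ⟶ X)) (𝟙 B) ≫ f₁) prod.snd with ht
  have ht2 : dag t ≫ prod.snd = 𝟙 B := by
    conv_lhs => rw [hC.fix t]
    simp [ht]
  have ht1 : dag t ≫ prod.fst = dag f₁ := by
    have hc := hC.comp (prod.lift f₁ (prod.snd : D.obj X ⨯ B ⟶ B)) prod.fst
    simp only [prod.lift_fst, prod.comp_lift, prod.map_snd, Category.comp_id] at hc
    rw [hc, ht]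
  have htt : dag t = prod.lift (dag f₁) (𝟙 B) := by
    apply Limits.prod.hom_ext <;> simp [ht1, ht2]
  have hfact :
      prod.lift (prod.map (D.map (prod.fst : X ⨯ Y ⟶ X)) (𝟙 B) ≫ f₁) (prod.snd ≫ c) =
        prod.lift (prod.map (D.map (prod.fst : X ⨯ Y ⟶ X)) (𝟙 B) ≫ f₁) prod.snd ≫
          prod.map (𝟙 X) c := by
    apply Limits.prod.hom_ext <;> simp
  rw [hfact, hC.comp]
  have hmid :
      prod.map (D.map (prod.map (𝟙 X) c)) (𝟙 B) ≫
          prod.lift (prod.map (D.map (prod.fst : X ⨯ Y ⟶ X)) (𝟙 B) ≫ f₁) prod.snd = t := by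
    apply Limits.prod.hom_ext
    · simp [ht, prod.map_map_assoc, ← D.map_comp]
    · simp [ht]
  rw [hmid, htt]
  apply Limits.prod.hom_ext <;> simp

/-- Constant-first-component lemma. -/
lemma const_fst {X Y B : C} (c : B ⟶ X) (g₁ : D.obj X ⨯ B ⟶ Y) :
    dag (prod.lift (prod.snd ≫ c)
        (prod.map (D.map (prod.fst : X ⨯ Y ⟶ X)) (𝟙 B) ≫ g₁)) =
      prod.lift c (prod.lift (c ≫ p.app X) (𝟙 B) ≫ g₁) := by
  set K : D.obj (X ⨯ Y) ⨯ B ⟶ X ⨯ Y :=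
    prod.lift (prod.snd ≫ c) (prod.map (D.map (prod.fst : X ⨯ Y ⟶ X)) (𝟙 B) ≫ g₁) with hK
  have hfst : dag K ≫ prod.fst = c := by
    have hc := hC.comp (prod.lift (prod.snd ≫ c) g₁) (prod.fst : X ⨯ Y ⟶ X)
    simp only [prod.lift_fst, prod.comp_lift, prod.map_snd_assoc, Category.id_comp] at hc
    rw [dag_snd_comp hC] at hc
    rw [← hc]
  have hsnd : dag K ≫ prod.snd = prod.lift (c ≫ p.app X) (𝟙 B) ≫ g₁ := by
    conv_lhs => rw [hC.fix K]
    have hnat : p.app (X ⨯ Y) ≫ D.map (prod.fst : X ⨯ Y ⟶ X) =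
        prod.fst ≫ p.app X := (p.naturality prod.fst).symm
    simp only [hK, Category.assoc, prod.lift_snd, prod.map_map_assoc, Category.comp_id,
      Category.id_comp]
    rw [hnat]
    simp [prod.lift_map, ← hK, reassoc_of% hfst]
  apply Limits.prod.hom_ext <;> simp [hfst, hsnd]

end Aux

/-- **Bekič identity.**  Every guarded Conway category satisfies the Bekič identity:
for `f : ◇X × ◇Y × A ⟶ X` and `g : ◇X × ◇Y × A ⟶ Y`,
`(⟨f,g⟩ ∘ (can × id_A))† = ⟨e_L†, e_R†⟩` where `can = ⟨◇π₁, ◇π₂⟩ : ◇(X × Y) ⟶ ◇X × ◇Y`,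
`e_R = g ∘ ⟨p_X ∘ f†, id⟩` and `e_L = f ∘ (id × ⟨p_Y ∘ e_R†, id⟩)`. -/
theorem guardedConway_bekic {C : Type u} [Category.{v} C] [HasFiniteProducts C]
    (D : C ⥤ C) (p : 𝟭 C ⟶ D)
    (dag : ∀ {X Y : C}, (D.obj X ⨯ Y ⟶ X) → (Y ⟶ X))
    (hC : IsGuardedConway D p @dag) :
    ∀ {X Y A : C} (f : D.obj X ⨯ (D.obj Y ⨯ A) ⟶ X) (g : D.obj X ⨯ (D.obj Y ⨯ A) ⟶ Y),
      dag (prod.lift (prod.fst ≫ D.map prod.fst)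
            (prod.lift (prod.fst ≫ D.map prod.snd) prod.snd) ≫ prod.lift f g) =
      prod.lift
        (dag (prod.map (𝟙 (D.obj X))
              (prod.lift (dag (prod.lift (dag f ≫ p.app X) (𝟙 (D.obj Y ⨯ A)) ≫ g) ≫ p.app Y)
                (𝟙 A)) ≫ f))
        (dag (prod.lift (dag f ≫ p.app X) (𝟙 (D.obj Y ⨯ A)) ≫ g)) := by
  intro X Y A f g
  set a : D.obj (X ⨯ Y) ⨯ A ⟶ D.obj X ⨯ (D.obj Y ⨯ A) :=
    prod.lift (prod.fst ≫ D.map prod.fst)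
      (prod.lift (prod.fst ≫ D.map prod.snd) prod.snd) with ha
  set b : D.obj (X ⨯ Y) ⨯ A ⟶ D.obj Y ⨯ A :=
    prod.map (D.map prod.snd) (𝟙 A) with hb
  set eR : D.obj Y ⨯ A ⟶ Y :=
    prod.lift (dag f ≫ p.app X) (𝟙 (D.obj Y ⨯ A)) ≫ g with heR
  have hbl : prod.map (D.map (prod.snd : X ⨯ Y ⟶ Y)) (𝟙 A) =
      prod.lift (prod.fst ≫ D.map prod.snd) prod.snd := by
    apply Limits.prod.hom_ext <;> simp
  -- Step 1: first double-dagger application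
  have step1 : dag (a ≫ prod.lift f g) = dag (prod.lift (b ≫ dag f) (a ≫ g)) := by
    have hk := hC.ddag (prod.lift
      (prod.map (D.map (prod.fst : X ⨯ Y ⟶ X)) (𝟙 (D.obj (X ⨯ Y) ⨯ A)) ≫
        (prod.map (𝟙 (D.obj X)) b ≫ f))
      (prod.snd ≫ (a ≫ g)))
    rw [tri hC (prod.map (𝟙 (D.obj X)) b ≫ f) (a ≫ g), hC.param f b] at hk
    have hk1 : prod.lift prod.fst (𝟙 (D.obj (X ⨯ Y) ⨯ A)) ≫ prod.lift
        (prod.map (D.map (prod.fst : X ⨯ Y ⟶ X)) (𝟙 (D.obj (X ⨯ Y) ⨯ A)) ≫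
          (prod.map (𝟙 (D.obj X)) b ≫ f))
        (prod.snd ≫ (a ≫ g)) = a ≫ prod.lift f g := by
      apply Limits.prod.hom_ext
      · simp [ha, hb, hbl]
      · simp
    rw [hk1] at hk
    exact hk.symm
  -- Step 2: second double-dagger application
  have step2 : dag (prod.lift (b ≫ dag f) (a ≫ g)) =
      dag (b ≫ prod.lift (dag f) eR) := by
    have hn := hC.ddag (prod.lift
      (prod.snd ≫ (b ≫ dag f))
      (prod.map (D.map (prod.fst : X ⨯ Y ⟶ X)) (𝟙 (D.obj (X ⨯ Y) ⨯ A)) ≫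
        (prod.map (𝟙 (D.obj X)) b ≫ g)))
    rw [const_fst hC (b ≫ dag f) (prod.map (𝟙 (D.obj X)) b ≫ g)] at hn
    have e1 : prod.lift (b ≫ dag f)
        (prod.lift ((b ≫ dag f) ≫ p.app X) (𝟙 (D.obj (X ⨯ Y) ⨯ A)) ≫
          (prod.map (𝟙 (D.obj X)) b ≫ g)) = b ≫ prod.lift (dag f) eR := by
      apply Limits.prod.hom_ext
      · simp
      · simp [heR, prod.lift_map_assoc, prod.comp_lift_assoc]
    have e2 : prod.lift prod.fst (𝟙 (D.obj (X ⨯ Y) ⨯ A)) ≫ prod.lift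
        (prod.snd ≫ (b ≫ dag f))
        (prod.map (D.map (prod.fst : X ⨯ Y ⟶ X)) (𝟙 (D.obj (X ⨯ Y) ⨯ A)) ≫
          (prod.map (𝟙 (D.obj X)) b ≫ g)) = prod.lift (b ≫ dag f) (a ≫ g) := by
      apply Limits.prod.hom_ext
      · simp
      · simp [ha, hb, hbl]
    rw [e1, e2] at hn
    exact hn.symm
  -- components of the final fixpoint
  have hsnd : dag (b ≫ prod.lift (dag f) eR) ≫ prod.snd = dag eR := by
    have hc := hC.comp (prod.lift (dag f) eR) (prod.snd : X ⨯ Y ⟶ Y)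
    rw [prod.lift_snd] at hc
    rw [← hb] at hc
    exact hc.symm
  have hfst : dag (b ≫ prod.lift (dag f) eR) ≫ prod.fst =
      dag (prod.map (𝟙 (D.obj X)) (prod.lift (dag eR ≫ p.app Y) (𝟙 A)) ≫ f) := by
    rw [hC.param f (prod.lift (dag eR ≫ p.app Y) (𝟙 A))]
    have hq := hC.fix (b ≫ prod.lift (dag f) eR)
    conv_lhs => rw [hq]
    have hnat : p.app (X ⨯ Y) ≫ D.map (prod.snd : X ⨯ Y ⟶ Y) = prod.snd ≫ p.app Y :=
      (p.naturality prod.snd).symm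
    have key : prod.lift (dag (b ≫ prod.lift (dag f) eR)) (𝟙 A) ≫
        prod.map (p.app (X ⨯ Y)) (𝟙 A) ≫ b = prod.lift (dag eR ≫ p.app Y) (𝟙 A) := by
      have hsnd' := reassoc_of% hsnd
      apply Limits.prod.hom_ext
      · rw [hb] at hsnd' ⊢
        simp only [Category.assoc, prod.map_fst, prod.map_fst_assoc,
          prod.lift_fst_assoc, prod.lift_fst]
        rw [hnat]
        exact hsnd' (p.app Y)
      · simp [hb]
    simp only [Category.assoc] at key ⊢
    rw [reassoc_of% key]
    simp
  rw [step1, step2]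
  apply Limits.prod.hom_ext
  · rw [hfst, prod.lift_fst]
  · rw [hsnd, prod.lift_snd]
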